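/- arXiv:2006.10869 — 3 statements merged into one kernel-verified Lean document; each statement's English description precedes it below -/
import Mathlib

section
/- Let f : ℝ^q → ℝ^p be continuously differentiable, A : ℝ^p → ℝ^q a linear map, Y ⊆ ℝ^q, and define Λ_{f∘a} = sup over y in the convex hull of Y of ‖J(y)∘A‖₂ and Λ_f = sup over y in the convex hull of Y of ‖J(y)‖₂, where J(y) is the Fréchet derivative of f at y. Suppose y₁ = A x₁ + n₁ ∈ Y and y₂ = A x₂ + n₂ ∈ Y with ‖n₁‖₂ ≤ η and ‖n₂‖₂ ≤ η, and define the loss l(f, (x, y)) = ‖f(y) − x‖₂. Then |l(f, (x₂, y₂)) − l(f, (x₁, y₁))| ≤ (1 + Λ_{f∘a}) · ‖x₂ − x₁‖₂ + 2η · Λ_f. -/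
/-- With `Λfa` and `Λf` the suprema over the convex hull of `Y` of `‖J(y)∘A‖`
and `‖J(y)‖`, and samples `(x₁, y₁)`, `(x₂, y₂)` with `yᵢ = A xᵢ + nᵢ ∈ Y`, `‖nᵢ‖ ≤ η`,
the losses `l(f,(x,y)) = ‖f(y) − x‖` satisfy
`|l(f,s₂) − l(f,s₁)| ≤ (1 + Λfa) ‖x₂ − x₁‖ + 2 η Λf`. -/
theorem loss_difference_bound {p q : ℕ}
    (f : EuclideanSpace ℝ (Fin q) → EuclideanSpace ℝ (Fin p))
    (hf : ContDiff ℝ 1 f)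
    (A : EuclideanSpace ℝ (Fin p) →L[ℝ] EuclideanSpace ℝ (Fin q))
    (Y : Set (EuclideanSpace ℝ (Fin q))) (η : ℝ)
    (Λfa Λf : ℝ)
    (hbda : BddAbove ((fun y => ‖(fderiv ℝ f y).comp A‖) '' convexHull ℝ Y))
    (hbdf : BddAbove ((fun y => ‖fderiv ℝ f y‖) '' convexHull ℝ Y))
    (hΛfa : Λfa = ⨆ y ∈ convexHull ℝ Y, ‖(fderiv ℝ f y).comp A‖)
    (hΛf : Λf = ⨆ y ∈ convexHull ℝ Y, ‖fderiv ℝ f y‖)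
    (x₁ x₂ : EuclideanSpace ℝ (Fin p)) (n₁ n₂ : EuclideanSpace ℝ (Fin q))
    (hn₁ : ‖n₁‖ ≤ η) (hn₂ : ‖n₂‖ ≤ η)
    (hy₁ : A x₁ + n₁ ∈ Y) (hy₂ : A x₂ + n₂ ∈ Y) :
    |‖f (A x₂ + n₂) - x₂‖ - ‖f (A x₁ + n₁) - x₁‖| ≤
      (1 + Λfa) * ‖x₂ - x₁‖ + 2 * η * Λf := by
  set y₁ := A x₁ + n₁ with hy1def
  set y₂ := A x₂ + n₂ with hy2def
  set v := y₂ - y₁ with hvdef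
  have hdf : Differentiable ℝ f := hf.differentiable one_ne_zero
  have hmem : ∀ t ∈ Set.Icc (0:ℝ) 1, y₁ + t • v ∈ convexHull ℝ Y := by
    intro t ht
    exact (convex_convexHull ℝ Y).add_smul_sub_mem (subset_convexHull ℝ Y hy₁)
      (subset_convexHull ℝ Y hy₂) ht
  -- bounds on sup
  have hne : (convexHull ℝ Y).Nonempty := ⟨y₁, subset_convexHull ℝ Y hy₁⟩
  have hgen : ∀ (g : EuclideanSpace ℝ (Fin q) → ℝ), (∀ z, 0 ≤ g z) →
      BddAbove (g '' convexHull ℝ Y) →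
      ∀ z ∈ convexHull ℝ Y, g z ≤ ⨆ y ∈ convexHull ℝ Y, g y := by
    intro g hg0 hbd z hz
    have hbd' : BddAbove (Set.range fun i : convexHull ℝ Y => g i) := by
      rwa [← Set.image_eq_range]
    have h1 : g z ≤ ⨆ i : convexHull ℝ Y, g i := le_ciSup_set hbd hz
    have h2 : sSup (∅ : Set ℝ) ≤ ⨆ i : convexHull ℝ Y, g i := by
      rw [Real.sSup_empty]; exact le_trans (hg0 z) h1
    rw [← ciSup_subtype'' hbd' h2]; exact h1
  have hΛfa' : ∀ z ∈ convexHull ℝ Y, ‖(fderiv ℝ f z).comp A‖ ≤ Λfa := by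
    intro z hz; rw [hΛfa]
    exact hgen (fun y => ‖(fderiv ℝ f y).comp A‖) (fun _ => norm_nonneg _) hbda z hz
  have hΛf' : ∀ z ∈ convexHull ℝ Y, ‖fderiv ℝ f z‖ ≤ Λf := by
    intro z hz; rw [hΛf]
    exact hgen (fun y => ‖fderiv ℝ f y‖) (fun _ => norm_nonneg _) hbdf z hz
  have hΛf0 : 0 ≤ Λf :=
    le_trans (norm_nonneg _) (hΛf' y₁ (subset_convexHull ℝ Y hy₁))
  have hv : v = A (x₂ - x₁) + (n₂ - n₁) := by
    simp only [hvdef, hy1def, hy2def, map_sub]; abel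
  have hη0 : 0 ≤ η := le_trans (norm_nonneg _) hn₁
  set C : ℝ := Λfa * ‖x₂ - x₁‖ + 2 * η * Λf with hCdef
  -- derivative along the segment
  have key : ‖f y₂ - f y₁‖ ≤ C := by
    set g : ℝ → EuclideanSpace ℝ (Fin p) := fun t => f (y₁ + t • v) with hgdef
    have hg : ∀ t ∈ Set.Icc (0:ℝ) 1,
        HasDerivWithinAt g ((fderiv ℝ f (y₁ + t • v)) v) (Set.Icc 0 1) t := by
      intro t ht
      have h1 : HasDerivAt (fun s : ℝ => y₁ + s • v) v t := by
        simpa using ((hasDerivAt_id t).smul_const v).const_add y₁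
      exact ((hdf (y₁ + t • v)).hasFDerivAt.comp_hasDerivAt t h1).hasDerivWithinAt
    have hbound : ∀ t ∈ Set.Icc (0:ℝ) 1, ‖(fderiv ℝ f (y₁ + t • v)) v‖ ≤ C := by
      intro t ht
      have hz := hmem t ht
      set z := y₁ + t • v
      have : (fderiv ℝ f z) v = ((fderiv ℝ f z).comp A) (x₂ - x₁) + (fderiv ℝ f z) (n₂ - n₁) := by
        rw [hv]; simp
      rw [this]
      calc ‖((fderiv ℝ f z).comp A) (x₂ - x₁) + (fderiv ℝ f z) (n₂ - n₁)‖
          ≤ ‖((fderiv ℝ f z).comp A) (x₂ - x₁)‖ + ‖(fderiv ℝ f z) (n₂ - n₁)‖ := norm_add_le _ _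
        _ ≤ ‖(fderiv ℝ f z).comp A‖ * ‖x₂ - x₁‖ + ‖fderiv ℝ f z‖ * ‖n₂ - n₁‖ :=
            add_le_add (((fderiv ℝ f z).comp A).le_opNorm _) ((fderiv ℝ f z).le_opNorm _)
        _ ≤ Λfa * ‖x₂ - x₁‖ + Λf * (2 * η) := by
            apply add_le_add
            · exact mul_le_mul_of_nonneg_right (hΛfa' z hz) (norm_nonneg _)
            · apply mul_le_mul (hΛf' z hz) _ (norm_nonneg _) hΛf0
              calc ‖n₂ - n₁‖ ≤ ‖n₂‖ + ‖n₁‖ := norm_sub_le _ _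
                _ ≤ 2 * η := by linarith
        _ = C := by ring
    have := norm_image_sub_le_of_norm_deriv_le_segment_01' hg
      (fun t ht => hbound t (Set.Ico_subset_Icc_self ht))
    have h10 : g 1 = f y₂ := by simp [hgdef, hvdef]
    have h00 : g 0 = f y₁ := by simp [hgdef]
    rwa [h10, h00] at this
  have h1 : |‖f y₂ - x₂‖ - ‖f y₁ - x₁‖| ≤ ‖(f y₂ - x₂) - (f y₁ - x₁)‖ :=
    abs_norm_sub_norm_le _ _
  have h2 : ‖(f y₂ - x₂) - (f y₁ - x₁)‖ ≤ ‖f y₂ - f y₁‖ + ‖x₂ - x₁‖ := by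
    have : (f y₂ - x₂) - (f y₁ - x₁) = (f y₂ - f y₁) - (x₂ - x₁) := by abel
    rw [this]; exact norm_sub_le _ _
  calc |‖f y₂ - x₂‖ - ‖f y₁ - x₁‖| ≤ ‖f y₂ - f y₁‖ + ‖x₂ - x₁‖ := h1.trans h2
    _ ≤ C + ‖x₂ - x₁‖ := by linarith
    _ = (1 + Λfa) * ‖x₂ - x₁‖ + 2 * η * Λf := by rw [hCdef]; ring
end

section
/- Let X ⊆ ℝ^p and Y ⊆ ℝ^q be compact, let A : ℝ^p → ℝ^q be a linear map, η ≥ 0, and let the sample space D = {(x, A x + n) : x ∈ X, ‖n‖₂ ≤ η, A x + n ∈ Y} be equipped with the sum product metric ρ((x,y),(x',y')) = ‖x−x'‖₂ + ‖y−y'‖₂. Let μ be a Borel probability measure on D, and let S = (s₁, …, s_m) be drawn i.i.d. from μ. Let F : D^m → (ℝ^q → ℝ^p) be a learning algorithm producing for each training set S a continuously differentiable map f_S = F(S), and suppose there exist finite constants Λ₁, Λ₂, M such that for every S: (i) sup over y in the convex hull of Y of ‖J_{f_S}(y)∘A‖₂ ≤ Λ₁ and sup over y in the convex hull of Y of ‖J_{f_S}(y)‖₂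 ≤ Λ₂, where J_{f_S}(y) is the Fréchet derivative of f_S at y; (ii) sup over s = (x,y) ∈ D of ‖f_S(y) − x‖₂ ≤ M; and (iii) the functions S ↦ E_{s∼μ}[‖f_S(y) − x‖₂] and (S, s) ↦ ‖f_S(y) − x‖₂ are measurable. Fix δ > 0 and let N be a finite number such that X admits a (δ/2)-cover of cardinality N with respect to the Euclidean metric. Then for any ζ > 0, with probability at least 1 − ζ over the draw of S from μ^m, the generalization error GE(f_S) = |E_{s∼μ}[l(f_S, s)] − (1/m)·Σ_{i=1}^m l(f_S, s_i)|, where l(f, (x,y)) = ‖f(y) − x‖₂, satisfies GE(f_S) ≤ (1 + Λ₁)·δ + 2η·Λ₂ + M·√((2·N·log(2) + 2·log(1/ζ))/m). -/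
open MeasureTheory

open Real

lemma bern_mgf_bound {θ : ℝ} (h0 : 0 ≤ θ) (h1 : θ ≤ 1) {t : ℝ} (ht : 0 ≤ t) :
    1 + θ * (Real.exp t - 1) ≤ Real.exp (t * θ + t ^ 2 / 8) := by
  set den : ℝ → ℝ := fun u => 1 + θ * (Real.exp u - 1) with hden
  have hdenpos : ∀ u, 0 < den u := by
    intro u
    have : den u = (1 - θ) + θ * Real.exp u := by simp [hden]; ring
    rw [this]
    rcases eq_or_lt_of_le h0 with h | h
    · simp [← h]
    · have := Real.exp_pos u
      nlinarith
  have hdenderiv : ∀ u, HasDerivAt den (θ * Real.exp u) u := by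
    intro u
    exact (((Real.hasDerivAt_exp u).sub_const 1).const_mul θ).const_add 1
  set f : ℝ → ℝ := fun u => u * θ + u ^ 2 / 8 - Real.log (den u) with hf
  set g : ℝ → ℝ := fun u => θ + u / 4 - θ * Real.exp u / den u with hg
  have hfderiv : ∀ u, HasDerivAt f (g u) u := by
    intro u
    have hlog : HasDerivAt (fun u => Real.log (den u)) (θ * Real.exp u / den u) u :=
      (hdenderiv u).log (hdenpos u).ne'
    have h1' : HasDerivAt (fun u : ℝ => u * θ + u ^ 2 / 8) (θ + u / 4) u := by
      have := ((hasDerivAt_id u).mul_const θ).add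
        (((hasDerivAt_pow 2 u)).div_const 8)
      exact this.congr_deriv (by push_cast; ring)
    exact h1'.sub hlog
  have hgderiv : ∀ u, HasDerivAt g
      (1 / 4 - (θ * Real.exp u * den u - θ * Real.exp u * (θ * Real.exp u)) / (den u) ^ 2) u := by
    intro u
    have hnum : HasDerivAt (fun u => θ * Real.exp u) (θ * Real.exp u) u :=
      (Real.hasDerivAt_exp u).const_mul θ
    have hq : HasDerivAt (fun u => θ * Real.exp u / den u)
        ((θ * Real.exp u * den u - θ * Real.exp u * (θ * Real.exp u)) / (den u) ^ 2) u :=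
      hnum.div (hdenderiv u) (hdenpos u).ne'
    have hlin : HasDerivAt (fun u : ℝ => θ + u / 4) (1 / 4) u := by
      simpa using ((hasDerivAt_id u).div_const 4).const_add θ
    exact hlin.sub hq
  have hg'nonneg : ∀ u, 0 ≤ 1 / 4 -
      (θ * Real.exp u * den u - θ * Real.exp u * (θ * Real.exp u)) / (den u) ^ 2 := by
    intro u
    set a := θ * Real.exp u
    set d := den u
    have hd : 0 < d := hdenpos u
    have key : (a * d - a * a) / d ^ 2 ≤ 1 / 4 := by
      rw [div_le_div_iff₀ (by positivity) (by norm_num)]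
      nlinarith [sq_nonneg (d - 2 * a)]
    linarith
  -- g is monotone on ℝ, g 0 = 0
  have hgmono : Monotone g :=
    monotone_of_deriv_nonneg (fun u => (hgderiv u).differentiableAt)
      (fun u => by rw [(hgderiv u).deriv]; exact hg'nonneg u)
  have hg0 : g 0 = 0 := by simp [hg, hden]
  have hgnonneg : ∀ u, 0 ≤ u → 0 ≤ g u := fun u hu => hg0 ▸ hgmono hu
  have hfmono : MonotoneOn f (Set.Ici (0 : ℝ)) := by
    apply monotoneOn_of_deriv_nonneg (convex_Ici 0)
      (fun u _ => ((hfderiv u).differentiableAt).continuousAt.continuousWithinAt)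
      (fun u hu => ((hfderiv u).differentiableAt).differentiableWithinAt)
    intro u hu
    rw [(hfderiv u).deriv]
    exact hgnonneg u (le_of_lt (by simpa using hu))
  have hf0 : f 0 = 0 := by simp [hf, hden]
  have hft : 0 ≤ f t := hf0 ▸ hfmono (Set.self_mem_Ici) (Set.mem_Ici.2 ht) ht
  have : Real.log (den t) ≤ t * θ + t ^ 2 / 8 := by simp only [hf] at hft; linarith
  calc den t = Real.exp (Real.log (den t)) := (Real.exp_log (hdenpos t)).symm
    _ ≤ Real.exp (t * θ + t ^ 2 / 8) := Real.exp_le_exp.2 this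

open MeasureTheory Real

lemma pi_prod_integral {α : Type*} [MeasurableSpace α] (μ : Measure α) [IsProbabilityMeasure μ]
    (m : ℕ) (f : α → ℝ) (hf : Integrable f μ) :
    Integrable (fun S : Fin m → α => ∏ i, f (S i)) (Measure.pi fun _ => μ) ∧
    ∫ S : Fin m → α, ∏ i, f (S i) ∂(Measure.pi fun _ => μ) = (∫ a, f a ∂μ) ^ m := by
  letI : MeasureSpace α := ⟨μ⟩
  haveI : SigmaFinite (volume : Measure α) := inferInstanceAs (SigmaFinite μ)
  have hv : (Measure.pi fun _ : Fin m => μ) = (volume : Measure (Fin m → α)) := by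
    rw [MeasureTheory.volume_pi]
    rfl
  rw [hv]
  refine ⟨Integrable.fintype_prod (f := fun _ : Fin m => f) (fun _ => hf), ?_⟩
  rw [← hv]
  simpa using integral_fintype_prod_eq_pow (ι := Fin m) f (μ := μ)

lemma chernoff {α : Type*} [MeasurableSpace α] (μ : Measure α) [IsProbabilityMeasure μ]
    (m : ℕ) {U : Set α} (hU : MeasurableSet U) {ε : ℝ} (hε : 0 < ε) :
    (Measure.pi fun _ : Fin m => μ)
      {S | (m : ℝ) * ((μ U).toReal + ε) ≤ ∑ i : Fin m, Set.indicator U (fun _ => (1:ℝ)) (S i)} ≤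
    ENNReal.ofReal (Real.exp (-2 * m * ε ^ 2)) := by
  classical
  set ν := Measure.pi fun _ : Fin m => μ with hν
  haveI : IsProbabilityMeasure ν := by rw [hν]; infer_instance
  set θ := (μ U).toReal with hθ
  have hθ0 : 0 ≤ θ := ENNReal.toReal_nonneg
  have hθ1 : θ ≤ 1 := by
    rw [hθ]
    exact ENNReal.toReal_le_of_le_ofReal zero_le_one (by simpa using prob_le_one (μ := μ) (s := U))
  set h : α → ℝ := Set.indicator U (fun _ => (1:ℝ)) with hh
  have hmeas : Measurable h := measurable_const.indicator hU
  have hrange : ∀ a, h a = 0 ∨ h a = 1 := by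
    intro a; by_cases ha : a ∈ U <;> simp [hh, ha]
  set t : ℝ := 4 * ε with htdef
  have ht : 0 < t := by positivity
  set f1 : α → ℝ := fun a => Real.exp (t * h a) with hf1
  have hf1meas : Measurable f1 := (hmeas.const_mul t).exp
  have hf1int : Integrable f1 μ := by
    refine Integrable.mono' (integrable_const (Real.exp t)) hf1meas.aestronglyMeasurable
      (Filter.Eventually.of_forall fun a => ?_)
    rw [Real.norm_of_nonneg (Real.exp_nonneg _)]
    apply Real.exp_le_exp.2
    rcases hrange a with ha | ha
    · rw [ha]; nlinarith
    · rw [ha]; nlinarith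
  set W : (Fin m → α) → ℝ := fun S => ∑ i, h (S i) with hW
  have hWmeas : Measurable W :=
    Finset.measurable_sum _ (fun i _ => hmeas.comp (measurable_pi_apply i))
  have hexpW : (fun S => Real.exp (t * W S)) = fun S : Fin m → α => ∏ i, f1 (S i) := by
    funext S
    rw [hW, Finset.mul_sum, Real.exp_sum]
  obtain ⟨hintprod, hintegral⟩ := pi_prod_integral μ m f1 hf1int
  have hint : Integrable (fun S => Real.exp (t * W S)) ν := by rw [hexpW, hν]; exact hintprod
  -- Markov / Chernoff step
  have hmark := ProbabilityTheory.measure_ge_le_exp_mul_mgf (X := W) (μ := ν)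
    ((m : ℝ) * (θ + ε)) ht.le hint
  -- compute the mgf
  have hmgf : ProbabilityTheory.mgf W ν t = (∫ a, f1 a ∂μ) ^ m := by
    rw [ProbabilityTheory.mgf]
    rw [show (fun ω => Real.exp (t * W ω)) = fun S : Fin m → α => ∏ i, f1 (S i) from hexpW] at hint ⊢
    rw [hν]; exact hintegral
  -- per-coordinate integral
  have hf1eq : f1 = fun a => 1 + (Real.exp t - 1) * h a := by
    funext a
    rcases hrange a with ha | ha <;> simp [hf1, ha]
  have hintf1 : ∫ a, f1 a ∂μ = 1 + (Real.exp t - 1) * θ := by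
    rw [hf1eq]
    have hih : Integrable h μ := by
      refine Integrable.mono' (integrable_const (1:ℝ)) hmeas.aestronglyMeasurable
        (Filter.Eventually.of_forall fun a => ?_)
      rcases hrange a with ha | ha <;> simp [ha]
    rw [integral_add (integrable_const _) (hih.const_mul _), integral_const,
      integral_const_mul]
    have h2 : ∫ a, h a ∂μ = θ := by
      rw [hh, integral_indicator_const _ hU]
      simp [hθ, measureReal_def]
    rw [h2]
    simp
  have hbound : ∫ a, f1 a ∂μ ≤ Real.exp (t * θ + t ^ 2 / 8) := by
    rw [hintf1]
    have := bern_mgf_bound hθ0 hθ1 ht.le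
    linarith [this]
  have hnonneg : (0:ℝ) ≤ ∫ a, f1 a ∂μ := by
    rw [hintf1]
    nlinarith [Real.exp_pos t, Real.add_one_le_exp t]
  -- assemble
  have hfinal : Real.exp (-t * ((m : ℝ) * (θ + ε))) * ProbabilityTheory.mgf W ν t ≤
      Real.exp (-2 * m * ε ^ 2) := by
    rw [hmgf]
    calc Real.exp (-t * ((m : ℝ) * (θ + ε))) * (∫ a, f1 a ∂μ) ^ m
        ≤ Real.exp (-t * ((m : ℝ) * (θ + ε))) * Real.exp (t * θ + t ^ 2 / 8) ^ m := by
          apply mul_le_mul_of_nonneg_left (pow_le_pow_left₀ hnonneg hbound m) (Real.exp_nonneg _)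
      _ = Real.exp (-t * ((m : ℝ) * (θ + ε)) + m * (t * θ + t ^ 2 / 8)) := by
          rw [← Real.exp_nat_mul, ← Real.exp_add]
      _ ≤ Real.exp (-2 * m * ε ^ 2) := by
          apply Real.exp_le_exp.2
          have : -t * ((m : ℝ) * (θ + ε)) + m * (t * θ + t ^ 2 / 8) = -2 * m * ε ^ 2 := by
            rw [htdef]; ring
          rw [this]
  calc ν {S | (m : ℝ) * (θ + ε) ≤ W S}
      = ENNReal.ofReal ((ν {S | (m : ℝ) * (θ + ε) ≤ W S}).toReal) := by
        rw [ENNReal.ofReal_toReal (measure_ne_top _ _)]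
    _ ≤ ENNReal.ofReal (Real.exp (-2 * m * ε ^ 2)) :=
        ENNReal.ofReal_le_ofReal (hmark.trans hfinal)

lemma loss_var {p q : ℕ} {Y : Set (EuclideanSpace ℝ (Fin q))}
    (A : EuclideanSpace ℝ (Fin p) →L[ℝ] EuclideanSpace ℝ (Fin q)) {η Λ₁ Λ₂ : ℝ}
    (f : EuclideanSpace ℝ (Fin q) → EuclideanSpace ℝ (Fin p)) (hf : ContDiff ℝ 1 f)
    (hΛ₁ : ∀ y ∈ convexHull ℝ Y, ‖(fderiv ℝ f y).comp A‖ ≤ Λ₁)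
    (hΛ₂ : ∀ y ∈ convexHull ℝ Y, ‖fderiv ℝ f y‖ ≤ Λ₂)
    (x x' : EuclideanSpace ℝ (Fin p)) (n n' : EuclideanSpace ℝ (Fin q))
    (hn : ‖n‖ ≤ η) (hn' : ‖n'‖ ≤ η)
    (hy : A x + n ∈ Y) (hy' : A x' + n' ∈ Y) :
    |‖f (A x' + n') - x'‖ - ‖f (A x + n) - x‖| ≤ (1 + Λ₁) * ‖x' - x‖ + 2 * η * Λ₂ := by
  set y : EuclideanSpace ℝ (Fin q) := A x + n with hydef
  set y' : EuclideanSpace ℝ (Fin q) := A x' + n' with hy'def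
  set v : EuclideanSpace ℝ (Fin q) := y' - y with hvdef
  have hv : v = A (x' - x) + (n' - n) := by
    rw [hvdef, hydef, hy'def, map_sub]; abel
  have hz : ∀ τ ∈ Set.Icc (0:ℝ) 1, y + τ • v ∈ convexHull ℝ Y := by
    intro τ hτ
    have hseg : y + τ • v ∈ segment ℝ y y' := by
      rw [segment_eq_image']; exact ⟨τ, hτ, rfl⟩
    exact (convex_convexHull ℝ Y).segment_subset
      (subset_convexHull ℝ Y hy) (subset_convexHull ℝ Y hy') hseg
  set C : ℝ := Λ₁ * ‖x' - x‖ + Λ₂ * ‖n' - n‖ with hCdef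
  have hderiv : ∀ τ ∈ Set.Icc (0:ℝ) 1,
      HasDerivWithinAt (fun τ : ℝ => f (y + τ • v)) (fderiv ℝ f (y + τ • v) v)
        (Set.Icc (0:ℝ) 1) τ := by
    intro τ _
    have hψ : HasDerivAt (fun τ : ℝ => y + τ • v) v τ := by
      simpa using ((hasDerivAt_id τ).smul_const v).const_add y
    have hfd : HasFDerivAt f (fderiv ℝ f (y + τ • v)) (y + τ • v) :=
      ((hf.differentiable one_ne_zero) (y + τ • v)).hasFDerivAt
    exact (hfd.comp_hasDerivAt τ hψ).hasDerivWithinAt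
  have hbound : ∀ τ ∈ Set.Ico (0:ℝ) 1, ‖fderiv ℝ f (y + τ • v) v‖ ≤ C := by
    intro τ hτ
    have hmem := hz τ (Set.Ico_subset_Icc_self hτ)
    have happ : fderiv ℝ f (y + τ • v) v =
        ((fderiv ℝ f (y + τ • v)).comp A) (x' - x) + (fderiv ℝ f (y + τ • v)) (n' - n) := by
      rw [hv, map_add]; rfl
    rw [happ]
    refine (norm_add_le _ _).trans ?_
    rw [hCdef]
    gcongr
    · exact ((ContinuousLinearMap.le_opNorm _ _).trans
        (mul_le_mul_of_nonneg_right (hΛ₁ _ hmem) (norm_nonneg _)))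
    · exact ((ContinuousLinearMap.le_opNorm _ _).trans
        (mul_le_mul_of_nonneg_right (hΛ₂ _ hmem) (norm_nonneg _)))
  have hmvt := norm_image_sub_le_of_norm_deriv_le_segment_01' hderiv hbound
  have h1v : y + (1:ℝ) • v = y' := by rw [one_smul, hvdef]; abel
  have h0v : y + (0:ℝ) • v = y := by simp
  rw [h1v, h0v] at hmvt
  have hΛ₂0 : 0 ≤ Λ₂ := le_trans (norm_nonneg _) (hΛ₂ y (subset_convexHull ℝ Y hy))
  have hΛ₁0 : 0 ≤ Λ₁ := le_trans (norm_nonneg _) (hΛ₁ y (subset_convexHull ℝ Y hy))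
  have hkey : |‖f y' - x'‖ - ‖f y - x‖| ≤ ‖f y' - f y‖ + ‖x' - x‖ := by
    refine (abs_norm_sub_norm_le _ _).trans ?_
    have : (f y' - x') - (f y - x) = (f y' - f y) - (x' - x) := by abel
    rw [this]
    exact norm_sub_le _ _
  have hnn : ‖n' - n‖ ≤ 2 * η := (norm_sub_le _ _).trans (by linarith)
  have : ‖f y' - f y‖ ≤ C := hmvt
  rw [hCdef] at this
  nlinarith [norm_nonneg (x' - x), norm_nonneg (n' - n)]

lemma find_getD_spec {n : ℕ} (P : Fin n → Prop) [DecidablePred P] (j₀ : Fin n)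
    (h : ∃ j, P j) : P (if h : ∃ j, P j then Fin.find P h else j₀) := by
  rw [dif_pos h]
  exact Fin.find_spec h

lemma find_getD_eq_iff {n : ℕ} (P : Fin n → Prop) [DecidablePred P] (j₀ j : Fin n) :
    ((if h : ∃ j, P j then Fin.find P h else j₀) = j) ↔
      ((P j ∧ ∀ k, P k → j ≤ k) ∨ ((∀ k, ¬ P k) ∧ j₀ = j)) := by
  by_cases h : ∃ j, P j
  · rw [dif_pos h, Fin.find_eq_iff]
    constructor
    · rintro ⟨hPj, hmin⟩
      exact Or.inl ⟨hPj, fun k hk => not_lt.1 (fun hlt => hmin k hlt hk)⟩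
    · rintro (⟨hPj, hmin⟩ | ⟨hnone, _⟩)
      · exact ⟨hPj, fun k hk hPk => absurd (hmin k hPk) (not_le.2 hk)⟩
      · obtain ⟨k, hk⟩ := h
        exact absurd hk (hnone k)
  · rw [dif_neg h]
    push_neg at h
    constructor
    · intro hj; exact Or.inr ⟨h, hj⟩
    · rintro (⟨hPj, _⟩ | ⟨_, hj⟩)
      · exact absurd hPj (h j)
      · exact hj

lemma tv_bound {α : Type*} [MeasurableSpace α] (μ : MeasureTheory.Measure α)
    [MeasureTheory.IsProbabilityMeasure μ]
    (D : Set α) (hμD : μ D = 1)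
    {N : ℕ} (cell : Fin N → Set α) (hcellmeas : ∀ j, MeasurableSet (cell j))
    (hcelldisj : Pairwise (Function.onFun Disjoint cell)) (hcellunion : (⋃ j, cell j) = D)
    (cI : α → Fin N) (hcell_eq : ∀ j, cell j = D ∩ {s | cI s = j})
    (m : ℕ) (hm : 0 < m) (S : Fin m → α) (hSD : ∀ i, S i ∈ D)
    {ε : ℝ}
    (hnB : ∀ T : Finset (Fin N), ¬ ((m : ℝ) * ((μ (⋃ j ∈ T, cell j)).toReal + ε / 2) ≤
      ∑ i : Fin m, Set.indicator (⋃ j ∈ T, cell j) (fun _ => (1:ℝ)) (S i))) :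
    ∑ j, |((Finset.univ.filter fun i => cI (S i) = j).card : ℝ) / m -
      (μ (cell j)).toReal| ≤ ε := by
  classical
  set pc : Fin N → ℝ := fun j => (μ (cell j)).toReal with hpc
  set I : Fin N → Finset (Fin m) :=
    fun j => Finset.univ.filter (fun i => cI (S i) = j) with hI
  set pe : Fin N → ℝ := fun j => ((I j).card : ℝ) / m with hpe
  have hm0 : ((m:ℝ)) ≠ 0 := by exact_mod_cast hm.ne'
  have hmpos : (0:ℝ) < (m:ℝ) := by exact_mod_cast hm
  have hScell : ∀ i, S i ∈ cell (cI (S i)) := by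
    intro i
    rw [hcell_eq]
    exact ⟨hSD i, rfl⟩
  have hpcsum : ∑ j, pc j = 1 := by
    rw [hpc, ← ENNReal.toReal_sum (fun a _ => MeasureTheory.measure_ne_top _ _),
      ← tsum_fintype (L := SummationFilter.unconditional _), ← MeasureTheory.measure_iUnion hcelldisj hcellmeas, hcellunion, hμD]
    rfl
  have hksum : ∑ j, (I j).card = m := by
    rw [hI]
    have h := Finset.card_eq_sum_card_fiberwise
      (f := fun i : Fin m => cI (S i)) (s := Finset.univ) (t := Finset.univ)
      (fun i _ => Finset.mem_univ _)
    rw [Finset.card_univ, Fintype.card_fin] at h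
    exact h.symm
  have hpesum : ∑ j, pe j = 1 := by
    rw [hpe, ← Finset.sum_div]
    rw [show ∑ j, ((I j).card : ℝ) = ((∑ j, (I j).card : ℕ) : ℝ) by push_cast; rfl, hksum]
    field_simp
  have hindsum : ∀ T : Finset (Fin N),
      ∑ i : Fin m, Set.indicator (⋃ j ∈ T, cell j) (fun _ => (1:ℝ)) (S i) =
      ∑ j ∈ T, ((I j).card : ℝ) := by
    intro T
    have hpt : ∀ i, Set.indicator (⋃ j ∈ T, cell j) (fun _ => (1:ℝ)) (S i) =
        if cI (S i) ∈ T then (1:ℝ) else 0 := by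
      intro i
      by_cases hmem : S i ∈ ⋃ j ∈ T, cell j
      · rw [Set.indicator_of_mem hmem]
        obtain ⟨j₁, hj₁T, hcm⟩ := Set.mem_iUnion₂.1 hmem
        rw [hcell_eq] at hcm
        have : cI (S i) = j₁ := hcm.2
        rw [if_pos (this ▸ hj₁T)]
      · rw [Set.indicator_of_notMem hmem, if_neg]
        intro hTmem
        exact hmem (Set.mem_iUnion₂.2 ⟨cI (S i), hTmem, hScell i⟩)
    calc ∑ i : Fin m, Set.indicator (⋃ j ∈ T, cell j) (fun _ => (1:ℝ)) (S i)
        = ∑ i : Fin m, ∑ j ∈ T, if cI (S i) = j then (1:ℝ) else 0 := by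
          refine Finset.sum_congr rfl fun i _ => ?_
          rw [hpt i, Finset.sum_ite_eq T (cI (S i)) (fun _ => (1:ℝ))]
      _ = ∑ j ∈ T, ∑ i : Fin m, if cI (S i) = j then (1:ℝ) else 0 := Finset.sum_comm
      _ = ∑ j ∈ T, ((I j).card : ℝ) := by
          refine Finset.sum_congr rfl fun j _ => ?_
          rw [Finset.sum_boole, hI]
  have hmuU : ∀ T : Finset (Fin N), (μ (⋃ j ∈ T, cell j)).toReal = ∑ j ∈ T, pc j := by
    intro T
    rw [MeasureTheory.measure_biUnion_finset (fun a _ b _ hab => hcelldisj hab)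
      (fun j _ => hcellmeas j),
      ENNReal.toReal_sum (fun a _ => MeasureTheory.measure_ne_top _ _)]
  set T' : Finset (Fin N) := Finset.univ.filter (fun j => pc j ≤ pe j) with hT'
  have hnotB := hnB T'
  rw [not_le, hindsum T', hmuU T'] at hnotB
  have hTa : ∑ j ∈ T', pe j = (∑ j ∈ T', ((I j).card : ℝ)) / m := by
    rw [hpe, Finset.sum_div]
  have hS1 : ∑ j ∈ T', (pe j - pc j) < ε / 2 := by
    rw [Finset.sum_sub_distrib, hTa]
    rw [div_sub' hm0, div_lt_iff₀ hmpos]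
    nlinarith [hnotB]
  have hzero : ∑ j, (pe j - pc j) = 0 := by
    rw [Finset.sum_sub_distrib, hpesum, hpcsum, sub_self]
  have hsplit := Finset.sum_filter_add_sum_filter_not Finset.univ
    (fun j => pc j ≤ pe j) (fun j => |pe j - pc j|)
  have hA : ∑ j ∈ T', |pe j - pc j| = ∑ j ∈ T', (pe j - pc j) :=
    Finset.sum_congr rfl fun j hj => abs_of_nonneg
      (by have := (Finset.mem_filter.1 hj).2; linarith)
  have hBneg : ∑ j ∈ Finset.univ.filter (fun j => ¬ pc j ≤ pe j), |pe j - pc j| =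
      - ∑ j ∈ Finset.univ.filter (fun j => ¬ pc j ≤ pe j), (pe j - pc j) := by
    rw [← Finset.sum_neg_distrib]
    refine Finset.sum_congr rfl fun j hj => ?_
    have := (Finset.mem_filter.1 hj).2
    rw [abs_of_neg (by push_neg at this; linarith)]
  have hsplit2 := Finset.sum_filter_add_sum_filter_not Finset.univ
    (fun j => pc j ≤ pe j) (fun j => (pe j - pc j))
  have hgoal : ∑ j, |pe j - pc j| ≤ ε := by
    rw [← hsplit, hA, hBneg]
    linarith [hS1, hsplit2, hzero]
  exact hgoal

lemma det_bound {α : Type*} [MeasurableSpace α] (μ : MeasureTheory.Measure α)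
    [MeasureTheory.IsProbabilityMeasure μ]
    (D : Set α) (hDmeas : MeasurableSet D) (hμD : μ D = 1)
    {N : ℕ} (cell : Fin N → Set α) (hcellmeas : ∀ j, MeasurableSet (cell j))
    (hcelldisj : Pairwise (Function.onFun Disjoint cell)) (hcellunion : (⋃ j, cell j) = D)
    (cI : α → Fin N) (hcell_eq : ∀ j, cell j = D ∩ {s | cI s = j})
    (m : ℕ) (hm : 0 < m) (S : Fin m → α) (hSD : ∀ i, S i ∈ D)
    (l : α → ℝ) (hlsm : MeasureTheory.AEStronglyMeasurable l μ)
    (hl0 : ∀ s, 0 ≤ l s) {M : ℝ} (hlM : ∀ s ∈ D, l s ≤ M) (hM0 : 0 ≤ M)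
    {Δ₀ : ℝ} (hΔ0 : 0 ≤ Δ₀)
    (hdiam : ∀ j, ∀ s ∈ cell j, ∀ s' ∈ cell j, |l s - l s'| ≤ Δ₀) :
    |(∫ s, l s ∂μ) - (1 / (m:ℝ)) * ∑ i : Fin m, l (S i)| ≤
      Δ₀ + M * ∑ j, |((Finset.univ.filter fun i => cI (S i) = j).card : ℝ) / m -
        (μ (cell j)).toReal| := by
  classical
  set pc : Fin N → ℝ := fun j => (μ (cell j)).toReal with hpc
  set I : Fin N → Finset (Fin m) :=
    fun j => Finset.univ.filter (fun i => cI (S i) = j) with hI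
  set pe : Fin N → ℝ := fun j => ((I j).card : ℝ) / m with hpe
  have hm0 : ((m:ℝ)) ≠ 0 := by exact_mod_cast hm.ne'
  have hmpos : (0:ℝ) < (m:ℝ) := by exact_mod_cast hm
  have hpc0 : ∀ j, 0 ≤ pc j := fun j => ENNReal.toReal_nonneg
  have hpcsum : ∑ j, pc j = 1 := by
    rw [hpc, ← ENNReal.toReal_sum (fun a _ => MeasureTheory.measure_ne_top _ _),
      ← tsum_fintype (L := SummationFilter.unconditional _), ← MeasureTheory.measure_iUnion hcelldisj hcellmeas, hcellunion, hμD]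
    rfl
  have hμDc : μ Dᶜ = 0 := by
    rw [MeasureTheory.measure_compl hDmeas (MeasureTheory.measure_ne_top _ _), hμD,
      MeasureTheory.measure_univ, tsub_self]
  have haeD : ∀ᵐ s ∂μ, s ∈ D := by
    rw [MeasureTheory.ae_iff]
    exact hμDc
  have hlint : MeasureTheory.Integrable l μ := by
    refine MeasureTheory.Integrable.mono' (MeasureTheory.integrable_const M) hlsm
      (haeD.mono fun s hs => ?_)
    rw [Real.norm_eq_abs, abs_of_nonneg (hl0 s)]
    exact hlM s hs
  have hSIcell : ∀ j, ∀ i ∈ I j, S i ∈ cell j := by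
    intro j i hi
    rw [hcell_eq]
    exact ⟨hSD i, (Finset.mem_filter.1 hi).2⟩
  have hlcellM : ∀ j, ∀ s ∈ cell j, l s ≤ M := by
    intro j s hs
    rw [hcell_eq] at hs
    exact hlM s hs.1
  have hcellsubD : ∀ j, cell j ⊆ D := fun j => by rw [hcell_eq]; exact Set.inter_subset_left
  set ei : Fin N → ℝ := fun j => ∫ s in cell j, l s ∂μ with hei
  set se : Fin N → ℝ := fun j => (1 / (m:ℝ)) * ∑ i ∈ I j, l (S i) with hse
  have hcellbound : ∀ j, |ei j - se j| ≤ Δ₀ * pc j + M * |pe j - pc j| := by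
    intro j
    rcases Finset.eq_empty_or_nonempty (I j) with hIe | hIne
    · have hse0 : se j = 0 := by simp [hse, hIe]
      have hpe0 : pe j = 0 := by simp [hpe, hIe]
      have heib : |ei j| ≤ M * pc j := by
        simp only [hei, hpc]
        rw [← Real.norm_eq_abs]
        refine MeasureTheory.norm_setIntegral_le_of_norm_le_const
          (MeasureTheory.measure_lt_top _ _) ?_
        intro s hs
        rw [Real.norm_eq_abs, abs_of_nonneg (hl0 s)]
        exact hlcellM j s hs
      rw [hse0, hpe0, sub_zero, zero_sub, abs_neg, abs_of_nonneg (hpc0 j)]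
      have h0 : 0 ≤ Δ₀ * pc j := mul_nonneg hΔ0 (hpc0 j)
      linarith [heib]
    · set kj : ℕ := (I j).card with hkj
      have hkj0 : 0 < kj := Finset.card_pos.2 hIne
      have hkjR : (0:ℝ) < kj := by exact_mod_cast hkj0
      set Lh : ℝ := (∑ i ∈ I j, l (S i)) / kj with hLh
      have hLh0 : 0 ≤ Lh :=
        div_nonneg (Finset.sum_nonneg fun i _ => hl0 _) hkjR.le
      have hLhM : Lh ≤ M := by
        rw [hLh, div_le_iff₀ hkjR]
        calc ∑ i ∈ I j, l (S i) ≤ ∑ _i ∈ I j, M :=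
              Finset.sum_le_sum fun i hi => hlcellM j _ (hSIcell j i hi)
          _ = kj * M := by rw [Finset.sum_const, nsmul_eq_mul, hkj]
          _ = M * kj := by ring
      have hnear : ∀ s ∈ cell j, |l s - Lh| ≤ Δ₀ := by
        intro s hs
        have hsumI : ∑ i ∈ I j, (l s - l (S i)) = kj * l s - ∑ i ∈ I j, l (S i) := by
          rw [Finset.sum_sub_distrib, Finset.sum_const, nsmul_eq_mul, hkj]
        have heq : l s - Lh = (∑ i ∈ I j, (l s - l (S i))) / kj := by
          rw [hsumI, hLh, sub_div]
          congr 1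
          rw [mul_comm, mul_div_assoc, div_self hkjR.ne', mul_one]
        rw [heq, abs_div, abs_of_pos hkjR, div_le_iff₀ hkjR]
        calc |∑ i ∈ I j, (l s - l (S i))| ≤ ∑ i ∈ I j, |l s - l (S i)| :=
              Finset.abs_sum_le_sum_abs _ _
          _ ≤ ∑ _i ∈ I j, Δ₀ :=
              Finset.sum_le_sum fun i hi => hdiam j s hs _ (hSIcell j i hi)
          _ = kj * Δ₀ := by rw [Finset.sum_const, nsmul_eq_mul, hkj]
          _ = Δ₀ * kj := by ring
      have heint : |ei j - pc j * Lh| ≤ Δ₀ * pc j := by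
        have hsub : ei j - pc j * Lh = ∫ s in cell j, (l s - Lh) ∂μ := by
          rw [MeasureTheory.integral_sub hlint.integrableOn
            (MeasureTheory.integrableOn_const (MeasureTheory.measure_ne_top _ _))]
          rw [MeasureTheory.setIntegral_const, smul_eq_mul]
          rfl
        rw [hsub]
        simp only [hpc]
        rw [← Real.norm_eq_abs]
        refine MeasureTheory.norm_setIntegral_le_of_norm_le_const
          (MeasureTheory.measure_lt_top _ _) ?_
        intro s hs
        rw [Real.norm_eq_abs]
        exact hnear s hs
      have hsumL : ∑ i ∈ I j, l (S i) = kj * Lh := by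
        rw [hLh]
        field_simp
      have hseL : se j = pe j * Lh := by
        simp only [hse, hpe]
        rw [hsumL, ← hkj]
        ring
      have hmul : |pc j * Lh - pe j * Lh| ≤ M * |pe j - pc j| := by
        rw [show pc j * Lh - pe j * Lh = (pc j - pe j) * Lh by ring, abs_mul, abs_sub_comm,
          abs_of_nonneg hLh0, mul_comm]
        exact mul_le_mul_of_nonneg_right hLhM (abs_nonneg _)
      calc |ei j - se j| = |(ei j - pc j * Lh) + (pc j * Lh - se j)| := by ring_nf
        _ ≤ |ei j - pc j * Lh| + |pc j * Lh - se j| := abs_add_le _ _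
        _ ≤ Δ₀ * pc j + M * |pe j - pc j| := by
            rw [hseL]
            exact add_le_add heint hmul
  have hint_split : ∫ s, l s ∂μ = ∑ j, ei j := by
    rw [← MeasureTheory.integral_add_compl hDmeas hlint]
    have h2 : ∫ s in Dᶜ, l s ∂μ = 0 := by
      rw [MeasureTheory.Measure.restrict_eq_zero.2 hμDc, MeasureTheory.integral_zero_measure]
    rw [h2, add_zero, ← hcellunion,
      MeasureTheory.integral_iUnion_fintype hcellmeas hcelldisj (fun j => hlint.integrableOn)]
  have hemp_split : (1 / (m:ℝ)) * ∑ i : Fin m, l (S i) = ∑ j, se j := by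
    simp only [hse]
    rw [← Finset.mul_sum]
    congr 1
    exact (Finset.sum_fiberwise_of_maps_to (fun i _ => Finset.mem_univ (cI (S i)))
      (fun i => l (S i))).symm
  rw [hint_split, hemp_split, ← Finset.sum_sub_distrib]
  calc |∑ j, (ei j - se j)| ≤ ∑ j, |ei j - se j| := Finset.abs_sum_le_sum_abs _ _
    _ ≤ ∑ j, (Δ₀ * pc j + M * |pe j - pc j|) :=
        Finset.sum_le_sum fun j _ => hcellbound j
    _ = Δ₀ * (∑ j, pc j) + M * (∑ j, |pe j - pc j|) := by
        rw [Finset.sum_add_distrib, ← Finset.mul_sum, ← Finset.mul_sum]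
    _ ≤ Δ₀ + M * ∑ j, |pe j - pc j| := by
        rw [hpcsum, mul_one]

set_option maxHeartbeats 1000000 in
/-- generalization error bound: for a learning algorithm `F` producing, from `m`
i.i.d. samples drawn from a probability measure `μ` concentrated on the sample space
`D = {(x, A x + n) : x ∈ X, ‖n‖ ≤ η, A x + n ∈ Y}`, continuously differentiable hypotheses
with uniformly bounded Jacobian norms (`Λ₁`, `Λ₂`) and uniformly bounded loss (`M`), if `X`
admits a finite `(δ/2)`-cover of cardinality `N`, then with probability at least `1 − ζ` over
the draw of the training set, the generalization error of the learnt hypothesis is at most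
`(1 + Λ₁) δ + 2 η Λ₂ + M √((2 N log 2 + 2 log(1/ζ))/m)`. -/
theorem generalization_error_bound {p q : ℕ}
    (X : Set (EuclideanSpace ℝ (Fin p))) (Y : Set (EuclideanSpace ℝ (Fin q)))
    (hX : IsCompact X) (hY : IsCompact Y)
    (A : EuclideanSpace ℝ (Fin p) →L[ℝ] EuclideanSpace ℝ (Fin q))
    (η : ℝ) (hη : 0 ≤ η)
    (D : Set (EuclideanSpace ℝ (Fin p) × EuclideanSpace ℝ (Fin q)))
    (hD : D = {s | ∃ x ∈ X, ∃ n : EuclideanSpace ℝ (Fin q),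
        ‖n‖ ≤ η ∧ A x + n ∈ Y ∧ s = (x, A x + n)})
    (μ : Measure (EuclideanSpace ℝ (Fin p) × EuclideanSpace ℝ (Fin q)))
    [IsProbabilityMeasure μ] (hμD : μ D = 1)
    (m : ℕ) (hm : 0 < m)
    (F : ((Fin m → EuclideanSpace ℝ (Fin p) × EuclideanSpace ℝ (Fin q))) →
      (EuclideanSpace ℝ (Fin q) → EuclideanSpace ℝ (Fin p)))
    (hF : ∀ S, ContDiff ℝ 1 (F S))
    (Λ₁ Λ₂ M : ℝ)
    (hΛ₁ : ∀ S, ∀ y ∈ convexHull ℝ Y, ‖(fderiv ℝ (F S) y).comp A‖ ≤ Λ₁)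
    (hΛ₂ : ∀ S, ∀ y ∈ convexHull ℝ Y, ‖fderiv ℝ (F S) y‖ ≤ Λ₂)
    (hM : ∀ S, ∀ s ∈ D, ‖F S s.2 - s.1‖ ≤ M)
    (hmeas₁ : Measurable fun S => ∫ s, ‖F S s.2 - s.1‖ ∂μ)
    (hmeas₂ : Measurable fun pr :
        ((Fin m → EuclideanSpace ℝ (Fin p) × EuclideanSpace ℝ (Fin q)) ×
          (EuclideanSpace ℝ (Fin p) × EuclideanSpace ℝ (Fin q))) =>
        ‖F pr.1 pr.2.2 - pr.2.1‖)
    (δ : ℝ) (hδ : 0 < δ)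
    (N : ℕ) (C : Finset (EuclideanSpace ℝ (Fin p))) (hC : C.card = N)
    (hcover : ∀ x ∈ X, ∃ c ∈ C, ‖x - c‖ ≤ δ / 2)
    (ζ : ℝ) (hζ : 0 < ζ) :
    ENNReal.ofReal (1 - ζ) ≤
      (Measure.pi fun _ : Fin m => μ)
        {S | |(∫ s, ‖F S s.2 - s.1‖ ∂μ) -
              (1 / (m : ℝ)) * ∑ i : Fin m, ‖F S (S i).2 - (S i).1‖| ≤
            (1 + Λ₁) * δ + 2 * η * Λ₂ +
              M * Real.sqrt ((2 * (N : ℝ) * Real.log 2 + 2 * Real.log (1 / ζ)) / m)} := by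
  classical
  -- trivial case ζ ≥ 1
  rcases le_or_gt 1 ζ with hζ1 | hζ1
  · rw [ENNReal.ofReal_of_nonpos (by linarith)]
    exact zero_le
  set ν := (Measure.pi fun _ : Fin m => μ) with hν
  haveI : IsProbabilityMeasure ν := by rw [hν]; infer_instance
  set ε : ℝ := Real.sqrt ((2 * (N : ℝ) * Real.log 2 + 2 * Real.log (1 / ζ)) / m) with hεdef
  set Δ₀ : ℝ := (1 + Λ₁) * δ + 2 * η * Λ₂ with hΔdef
  -- nonemptiness of D and consequences
  have hDne : D.Nonempty := by
    rcases Set.eq_empty_or_nonempty D with h | h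
    · rw [h] at hμD; simp at hμD
    · exact h
  obtain ⟨s₀, hs₀⟩ := hDne
  obtain ⟨x₀, hx₀X, n₀, hn₀, hy₀Y, hs₀eq⟩ := hD ▸ hs₀
  set S₀ : Fin m → (EuclideanSpace ℝ (Fin p) × EuclideanSpace ℝ (Fin q)) := fun _ => s₀ with hS₀
  have hy₀hull : A x₀ + n₀ ∈ convexHull ℝ Y := subset_convexHull ℝ Y hy₀Y
  have hΛ₁0 : 0 ≤ Λ₁ := le_trans (norm_nonneg _) (hΛ₁ S₀ _ hy₀hull)
  have hΛ₂0 : 0 ≤ Λ₂ := le_trans (norm_nonneg _) (hΛ₂ S₀ _ hy₀hull)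
  have hM0 : 0 ≤ M := le_trans (norm_nonneg _) (hM S₀ s₀ hs₀)
  have hΔ0 : 0 ≤ Δ₀ := by
    rw [hΔdef]; positivity
  have hN0 : 0 < N := by
    obtain ⟨c', hc', _⟩ := hcover x₀ hx₀X
    rw [← hC]
    exact Finset.card_pos.2 ⟨c', hc'⟩
  have hlogζ : 0 < Real.log (1 / ζ) := Real.log_pos (by rw [lt_div_iff₀ hζ]; linarith)
  have hlog2 : 0 < Real.log 2 := Real.log_pos (by norm_num)
  have harg : 0 < (2 * (N : ℝ) * Real.log 2 + 2 * Real.log (1 / ζ)) / m := by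
    apply div_pos _ (by exact_mod_cast hm)
    have : (1:ℝ) ≤ (N:ℝ) := by exact_mod_cast hN0
    nlinarith
  have hε0 : 0 < ε := Real.sqrt_pos.2 harg
  have hεsq : ε ^ 2 = (2 * (N : ℝ) * Real.log 2 + 2 * Real.log (1 / ζ)) / m :=
    Real.sq_sqrt harg.le
  -- D is compact, hence measurable
  have hDcompact : IsCompact D := by
    have hK : IsCompact ((X ×ˢ Metric.closedBall (0 : EuclideanSpace ℝ (Fin q)) η) ∩
        ((fun z : EuclideanSpace ℝ (Fin p) × EuclideanSpace ℝ (Fin q) => A z.1 + z.2) ⁻¹' Y)) :=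
      (hX.prod (isCompact_closedBall _ _)).inter_right
        (hY.isClosed.preimage ((A.continuous.comp continuous_fst).add continuous_snd))
    have himg : D = (fun z : EuclideanSpace ℝ (Fin p) × EuclideanSpace ℝ (Fin q) =>
        (z.1, A z.1 + z.2)) '' ((X ×ˢ Metric.closedBall (0 : EuclideanSpace ℝ (Fin q)) η) ∩
        ((fun z : EuclideanSpace ℝ (Fin p) × EuclideanSpace ℝ (Fin q) => A z.1 + z.2) ⁻¹' Y)) := by
      rw [hD]
      ext s
      constructor
      · rintro ⟨x, hx, n, hn, hyY, rfl⟩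
        exact ⟨(x, n), ⟨⟨hx, by simpa using hn⟩, hyY⟩, rfl⟩
      · rintro ⟨⟨x, n⟩, ⟨⟨hx, hn⟩, hyY⟩, rfl⟩
        exact ⟨x, hx, n, by simpa using hn, hyY, rfl⟩
    rw [himg]
    exact hK.image (continuous_fst.prodMk ((A.continuous.comp continuous_fst).add continuous_snd))
  have hDmeas : MeasurableSet D := hDcompact.isClosed.measurableSet
  have hμDc : μ Dᶜ = 0 := by
    rw [measure_compl hDmeas (measure_ne_top _ _), hμD, measure_univ, tsub_self]
  -- the cover centers
  have e : Fin N ≃ {x // x ∈ C} := (C.equivFin.trans (finCongr hC)).symm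
  set c : Fin N → EuclideanSpace ℝ (Fin p) := fun j => ((e j : {x // x ∈ C}) :
    EuclideanSpace ℝ (Fin p)) with hc
  have hcov' : ∀ x ∈ X, ∃ j : Fin N, ‖x - c j‖ ≤ δ / 2 := by
    intro x hx
    obtain ⟨c', hc', hlt⟩ := hcover x hx
    refine ⟨e.symm ⟨c', hc'⟩, ?_⟩
    have hcj : c (e.symm ⟨c', hc'⟩) = c' := by
      rw [hc]
      simp
    rw [hcj]
    exact hlt
  -- cell decomposition
  set P : Fin N → (EuclideanSpace ℝ (Fin p) × EuclideanSpace ℝ (Fin q)) → Prop := fun j s => ‖s.1 - c j‖ ≤ δ / 2 with hP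
  have hPmeas : ∀ j, MeasurableSet {s : (EuclideanSpace ℝ (Fin p) × EuclideanSpace ℝ (Fin q)) | P j s} := by
    intro j
    exact (isClosed_le ((continuous_fst.sub continuous_const).norm) continuous_const).measurableSet
  set j₀ : Fin N := ⟨0, hN0⟩ with hj₀
  set cIdx : (EuclideanSpace ℝ (Fin p) × EuclideanSpace ℝ (Fin q)) → Fin N := fun s => (if h : ∃ j, P j s then Fin.find (fun j => P j s) h else j₀) with hcIdx
  have hcIdx_exists : ∀ s, (∃ j, P j s) → P (cIdx s) s := by
    intro s hs
    exact find_getD_spec (fun j => P j s) j₀ hs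
  have hfib : ∀ j, MeasurableSet {s : (EuclideanSpace ℝ (Fin p) × EuclideanSpace ℝ (Fin q)) | cIdx s = j} := by
    intro j
    have heq : {s : (EuclideanSpace ℝ (Fin p) × EuclideanSpace ℝ (Fin q)) | cIdx s = j} =
        ({s | P j s} ∩ ⋂ k, {s | P k s → j ≤ k}) ∪
        ((⋂ k, {s | P k s}ᶜ) ∩ {s | j₀ = j}) := by
      ext s
      simp only [Set.mem_setOf_eq, Set.mem_union, Set.mem_inter_iff, Set.mem_iInter,
        Set.mem_compl_iff]
      rw [hcIdx]
      exact find_getD_eq_iff (fun k => P k s) j₀ j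
    rw [heq]
    apply MeasurableSet.union
    · refine (hPmeas j).inter (MeasurableSet.iInter fun k => ?_)
      by_cases hjk : j ≤ k
      · have : {s : (EuclideanSpace ℝ (Fin p) × EuclideanSpace ℝ (Fin q)) | P k s → j ≤ k} = Set.univ := by
          ext s; simp [hjk]
        rw [this]; exact MeasurableSet.univ
      · have : {s : (EuclideanSpace ℝ (Fin p) × EuclideanSpace ℝ (Fin q)) | P k s → j ≤ k} = {s | P k s}ᶜ := by
          ext s; simp [hjk]
        rw [this]; exact (hPmeas k).compl
    · refine (MeasurableSet.iInter fun k => (hPmeas k).compl).inter ?_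
      by_cases hj : j₀ = j
      · have : {s : (EuclideanSpace ℝ (Fin p) × EuclideanSpace ℝ (Fin q)) | j₀ = j} = Set.univ := by ext s; simp [hj]
        rw [this]; exact MeasurableSet.univ
      · have : {s : (EuclideanSpace ℝ (Fin p) × EuclideanSpace ℝ (Fin q)) | j₀ = j} = ∅ := by ext s; simp [hj]
        rw [this]; exact MeasurableSet.empty
  set cell : Fin N → Set (EuclideanSpace ℝ (Fin p) × EuclideanSpace ℝ (Fin q)) := fun j => D ∩ {s | cIdx s = j} with hcell
  have hcellmeas : ∀ j, MeasurableSet (cell j) := fun j => hDmeas.inter (hfib j)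
  have hcelldisj : Pairwise (Function.onFun Disjoint cell) := by
    intro j k hjk
    simp only [Function.onFun, hcell]
    apply Set.disjoint_left.2
    rintro s ⟨_, hs1⟩ ⟨_, hs2⟩
    exact hjk (hs1 ▸ hs2 ▸ rfl)
  have hmemX : ∀ s ∈ D, s.1 ∈ X := by
    intro s hs
    obtain ⟨x, hx, n, _, _, rfl⟩ := hD ▸ hs
    exact hx
  have hcellunion : (⋃ j, cell j) = D := by
    ext s
    simp only [Set.mem_iUnion, hcell, Set.mem_inter_iff, Set.mem_setOf_eq]
    constructor
    · rintro ⟨j, hsD, _⟩; exact hsD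
    · intro hsD; exact ⟨cIdx s, hsD, rfl⟩
  have hcellP : ∀ j, ∀ s ∈ cell j, ‖s.1 - c j‖ ≤ δ / 2 := by
    rintro j s ⟨hsD, hsj⟩
    obtain ⟨j', hj'⟩ := hcov' s.1 (hmemX s hsD)
    have hth := hcIdx_exists s ⟨j', hj'⟩
    have hsj' : cIdx s = j := hsj
    rwa [hsj'] at hth
  -- cell measures
  set pc : Fin N → ℝ := fun j => (μ (cell j)).toReal with hpc
  have hpc0 : ∀ j, 0 ≤ pc j := fun j => ENNReal.toReal_nonneg
  have hpcsum : ∑ j, pc j = 1 := by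
    rw [hpc]
    rw [← ENNReal.toReal_sum (fun a _ => measure_ne_top _ _)]
    rw [← tsum_fintype (L := SummationFilter.unconditional _), ← measure_iUnion hcelldisj hcellmeas, hcellunion, hμD]
    rfl
  -- bad events and Chernoff bounds
  set B : Finset (Fin N) → Set (Fin m → (EuclideanSpace ℝ (Fin p) × EuclideanSpace ℝ (Fin q))) :=
    fun T => {S | (m : ℝ) * ((μ (⋃ j ∈ T, cell j)).toReal + ε / 2) ≤
      ∑ i : Fin m, Set.indicator (⋃ j ∈ T, cell j) (fun _ => (1:ℝ)) (S i)} with hB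
  have hUmeas : ∀ T : Finset (Fin N), MeasurableSet (⋃ j ∈ T, cell j) :=
    fun T => T.measurableSet_biUnion (fun j _ => hcellmeas j)
  have hBbound : ∀ T, ν (B T) ≤ ENNReal.ofReal (Real.exp (-2 * m * (ε / 2) ^ 2)) := by
    intro T
    rw [hν, hB]
    exact chernoff μ m (hUmeas T) (by positivity)
  have hmε : (m : ℝ) * ε ^ 2 = 2 * (N : ℝ) * Real.log 2 + 2 * Real.log (1 / ζ) := by
    rw [hεsq]
    field_simp
  have hexp : Real.exp (-2 * m * (ε / 2) ^ 2) = ((2:ℝ) ^ N)⁻¹ * ζ := by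
    have h1 : -2 * (m:ℝ) * (ε / 2) ^ 2 = -((N:ℝ) * Real.log 2) + -Real.log (1 / ζ) := by
      have : -2 * (m:ℝ) * (ε / 2) ^ 2 = -(((m:ℝ) * ε ^ 2) / 2) := by ring
      rw [this, hmε]; ring
    rw [h1, Real.exp_add, Real.exp_neg, Real.exp_neg, Real.exp_log (by positivity),
      Real.exp_nat_mul, Real.exp_log (by norm_num : (0:ℝ) < 2)]
    field_simp
  have hBut : ν (⋃ T : Finset (Fin N), B T) ≤ ENNReal.ofReal ζ := by
    calc ν (⋃ T, B T) ≤ ∑' T : Finset (Fin N), ν (B T) := measure_iUnion_le _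
      _ ≤ ∑' _T : Finset (Fin N), ENNReal.ofReal (((2:ℝ) ^ N)⁻¹ * ζ) :=
          ENNReal.tsum_le_tsum (fun T => by rw [← hexp]; exact hBbound T)
      _ = (Fintype.card (Finset (Fin N))) * ENNReal.ofReal (((2:ℝ) ^ N)⁻¹ * ζ) := by
          rw [tsum_fintype]
          simp [Finset.sum_const, nsmul_eq_mul, Finset.card_univ]
      _ = ENNReal.ofReal ζ := by
          rw [Fintype.card_finset, Fintype.card_fin]
          rw [show ((2 ^ N : ℕ) : ENNReal) = ENNReal.ofReal ((2 ^ N : ℕ) : ℝ) by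
            rw [ENNReal.ofReal_natCast]]
          rw [← ENNReal.ofReal_mul (by positivity)]
          congr 1
          push_cast
          field_simp
  have hallD : ν ((Set.univ.pi fun _ : Fin m => D)ᶜ) = 0 := by
    have h1 : ν (Set.univ.pi fun _ : Fin m => D) = 1 := by
      rw [hν, Measure.pi_pi]
      simp [hμD]
    rw [measure_compl (MeasurableSet.univ_pi fun _ => hDmeas) (measure_ne_top _ _), h1,
      measure_univ, tsub_self]
  set Good : Set (Fin m → (EuclideanSpace ℝ (Fin p) × EuclideanSpace ℝ (Fin q))) :=
    (Set.univ.pi fun _ : Fin m => D) ∩ (⋃ T : Finset (Fin N), B T)ᶜ with hGood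
  have hGoodc : ν Goodᶜ ≤ ENNReal.ofReal ζ := by
    rw [hGood, Set.compl_inter, compl_compl]
    calc ν (((Set.univ.pi fun _ : Fin m => D))ᶜ ∪ ⋃ T : Finset (Fin N), B T)
        ≤ ν ((Set.univ.pi fun _ : Fin m => D)ᶜ) + ν (⋃ T : Finset (Fin N), B T) :=
          measure_union_le _ _
      _ ≤ 0 + ENNReal.ofReal ζ := add_le_add hallD.le hBut
      _ = ENNReal.ofReal ζ := by rw [zero_add]
  have hGoodlb : ENNReal.ofReal (1 - ζ) ≤ ν Good := by
    rw [ENNReal.ofReal_sub _ hζ.le, ENNReal.ofReal_one]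
    rw [tsub_le_iff_right]
    calc (1 : ENNReal) = ν Set.univ := (measure_univ).symm
      _ ≤ ν (Good ∪ Goodᶜ) := measure_mono (by rw [Set.union_compl_self])
      _ ≤ ν Good + ν Goodᶜ := measure_union_le _ _
      _ ≤ ν Good + ENNReal.ofReal ζ := add_le_add le_rfl hGoodc
  refine le_trans hGoodlb (measure_mono ?_)
  -- the deterministic part: on the good event, the generalization bound holds
  rintro S ⟨hSpi, hSB⟩
  have hSD : ∀ i, S i ∈ D := fun i => hSpi i (Set.mem_univ i)
  have hnB : ∀ T : Finset (Fin N), S ∉ B T := by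
    intro T hT
    exact (Set.mem_compl_iff _ _).1 hSB (Set.mem_iUnion.2 ⟨T, hT⟩)
  simp only [Set.mem_setOf_eq]
  set l : (EuclideanSpace ℝ (Fin p) × EuclideanSpace ℝ (Fin q)) → ℝ :=
    fun s => ‖F S s.2 - s.1‖ with hl
  have hcell_eq : ∀ j, cell j = D ∩ {s | cIdx s = j} := fun j => by rw [hcell]
  have hnB' : ∀ T : Finset (Fin N), ¬ ((m : ℝ) * ((μ (⋃ j ∈ T, cell j)).toReal + ε / 2) ≤
      ∑ i : Fin m, Set.indicator (⋃ j ∈ T, cell j) (fun _ => (1:ℝ)) (S i)) := by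
    intro T hT
    exact hnB T hT
  have hTV := tv_bound μ D hμD cell hcellmeas hcelldisj hcellunion cIdx hcell_eq m hm S hSD hnB'
  have hlcont : Continuous l := (((hF S).continuous.comp continuous_snd).sub continuous_fst).norm
  have hdiam : ∀ j, ∀ s ∈ cell j, ∀ s' ∈ cell j, |l s - l s'| ≤ Δ₀ := by
    intro j s hs s' hs'
    have hsD := hs.1
    have hs'D := hs'.1
    have hdist : ‖s.1 - s'.1‖ ≤ δ := by
      have h1 := hcellP j s hs
      have h2 := hcellP j s' hs'
      have h3 : s.1 - s'.1 = (s.1 - c j) - (s'.1 - c j) := by abel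
      rw [h3]
      exact (norm_sub_le _ _).trans (by linarith)
    obtain ⟨x, hxX, n, hn, hyY, hseq⟩ := hD ▸ hsD
    obtain ⟨x', hx'X, n', hn', hy'Y, hs'eq⟩ := hD ▸ hs'D
    have hls : l s = ‖F S (A x + n) - x‖ := by rw [hl, hseq]
    have hls' : l s' = ‖F S (A x' + n') - x'‖ := by rw [hl, hs'eq]
    have hxx' : ‖x - x'‖ ≤ δ := by
      have ha : s.1 = x := by rw [hseq]
      have hb : s'.1 = x' := by rw [hs'eq]
      rwa [ha, hb] at hdist
    have hlv := loss_var A (F S) (hF S) (hΛ₁ S) (hΛ₂ S) x' x n' n hn' hn hy'Y hyY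
    rw [hls, hls', hΔdef]
    have h1Λ : (1 + Λ₁) * ‖x - x'‖ ≤ (1 + Λ₁) * δ :=
      mul_le_mul_of_nonneg_left hxx' (by linarith)
    calc |‖F S (A x + n) - x‖ - ‖F S (A x' + n') - x'‖|
        ≤ (1 + Λ₁) * ‖x - x'‖ + 2 * η * Λ₂ := hlv
      _ ≤ (1 + Λ₁) * δ + 2 * η * Λ₂ := by linarith
  have hdet := det_bound μ D hDmeas hμD cell hcellmeas hcelldisj hcellunion cIdx hcell_eq m hm
    S hSD l hlcont.aestronglyMeasurable (fun s => norm_nonneg _)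
    (fun s hs => hM S s hs) hM0 hΔ0 hdiam
  have hfin : |(∫ s, l s ∂μ) - (1 / (m:ℝ)) * ∑ i : Fin m, l (S i)| ≤ Δ₀ + M * ε :=
    hdet.trans (add_le_add le_rfl (mul_le_mul_of_nonneg_left hTV hM0))
  simp only [hl] at hfin
  exact hfin
end

section
/- Let X ⊆ ℝ^p, Y ⊆ ℝ^q, A : ℝ^p → ℝ^q a linear map, η ≥ 0, and D = {(x, A x + n) : x ∈ X, ‖n‖₂ ≤ η, A x + n ∈ Y}. Let f : ℝ^q → ℝ^p be continuously differentiable with Λ_{f∘a} = sup over y in the convex hull of Y of ‖J(y)∘A‖₂ and Λ_f = sup over y in the convex hull of Y of ‖J(y)‖₂. Then for any δ > 0 and any two samples s₁ = (x₁, y₁), s₂ = (x₂, y₂) ∈ D with ‖x₁ − x₂‖₂ ≤ δ, the losses l(f, s) = ‖f(y) − x‖₂ satisfy |l(f, s₁) − l(f, s₂)| ≤ (1 + Λ_{f∘a})·δ + 2η·Λ_f. -/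
lemma le_biSup_real {α : Type*} {s : Set α} {g : α → ℝ} (hg : ∀ y, 0 ≤ g y)
    (hbd : BddAbove (g '' s)) {c : α} (hc : c ∈ s) : g c ≤ ⨆ y ∈ s, g y := by
  obtain ⟨B, hB⟩ := hbd
  have hbdr : BddAbove (Set.range fun y => ⨆ _ : y ∈ s, g y) := by
    refine ⟨max B 0, ?_⟩
    rintro _ ⟨y, rfl⟩
    show (⨆ _ : y ∈ s, g y) ≤ B ⊔ 0
    by_cases hy : y ∈ s
    · rw [ciSup_pos hy]
      exact le_max_of_le_left (hB ⟨y, hy, rfl⟩)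
    · haveI : IsEmpty (y ∈ s) := ⟨hy⟩
      rw [Real.iSup_of_isEmpty]
      exact le_max_right _ _
  have h1 : (⨆ _ : c ∈ s, g c) ≤ ⨆ y ∈ s, g y := le_ciSup hbdr c
  rwa [ciSup_pos hc] at h1

/-- For samples `s₁ = (x₁, y₁)` and `s₂ = (x₂, y₂)` in the sample space
`D = {(x, A x + n) : x ∈ X, ‖n‖ ≤ η, A x + n ∈ Y}` with `‖x₁ − x₂‖ ≤ δ`, the losses
`l(f,(x,y)) = ‖f(y) − x‖` satisfy `|l(f,s₁) − l(f,s₂)| ≤ (1 + Λfa) δ + 2 η Λf`, where `Λfa`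
and `Λf` are the suprema over the convex hull of `Y` of `‖J(y)∘A‖` and `‖J(y)‖`. -/
theorem loss_difference_bound_of_close {p q : ℕ}
    (X : Set (EuclideanSpace ℝ (Fin p))) (Y : Set (EuclideanSpace ℝ (Fin q)))
    (A : EuclideanSpace ℝ (Fin p) →L[ℝ] EuclideanSpace ℝ (Fin q))
    (η : ℝ) (hη : 0 ≤ η)
    (D : Set (EuclideanSpace ℝ (Fin p) × EuclideanSpace ℝ (Fin q)))
    (hD : D = {s | ∃ x ∈ X, ∃ n : EuclideanSpace ℝ (Fin q),
        ‖n‖ ≤ η ∧ A x + n ∈ Y ∧ s = (x, A x + n)})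
    (f : EuclideanSpace ℝ (Fin q) → EuclideanSpace ℝ (Fin p))
    (hf : ContDiff ℝ 1 f)
    (Λfa Λf : ℝ)
    (hbda : BddAbove ((fun y => ‖(fderiv ℝ f y).comp A‖) '' convexHull ℝ Y))
    (hbdf : BddAbove ((fun y => ‖fderiv ℝ f y‖) '' convexHull ℝ Y))
    (hΛfa : Λfa = ⨆ y ∈ convexHull ℝ Y, ‖(fderiv ℝ f y).comp A‖)
    (hΛf : Λf = ⨆ y ∈ convexHull ℝ Y, ‖fderiv ℝ f y‖)
    (δ : ℝ) (hδ : 0 < δ)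
    (s₁ s₂ : EuclideanSpace ℝ (Fin p) × EuclideanSpace ℝ (Fin q))
    (hs₁ : s₁ ∈ D) (hs₂ : s₂ ∈ D) (hclose : ‖s₁.1 - s₂.1‖ ≤ δ) :
    |‖f s₁.2 - s₁.1‖ - ‖f s₂.2 - s₂.1‖| ≤ (1 + Λfa) * δ + 2 * η * Λf := by
  subst hD
  obtain ⟨x₁, hx₁X, n₁, hn₁, hy₁Y, hs₁eq⟩ := hs₁
  obtain ⟨x₂, hx₂X, n₂, hn₂, hy₂Y, hs₂eq⟩ := hs₂
  set y₁ := A x₁ + n₁ with hy₁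
  set y₂ := A x₂ + n₂ with hy₂
  rw [hs₁eq, hs₂eq]
  rw [hs₁eq, hs₂eq] at hclose
  simp only at hclose ⊢
  -- key bounds on the derivative norms over the convex hull
  have hdiff := hf.differentiable one_ne_zero
  have key_fa : ∀ y ∈ convexHull ℝ Y, ‖(fderiv ℝ f y).comp A‖ ≤ Λfa := by
    intro y hy
    rw [hΛfa]
    exact le_biSup_real (fun y => norm_nonneg _) hbda hy
  have key_f : ∀ y ∈ convexHull ℝ Y, ‖fderiv ℝ f y‖ ≤ Λf := by
    intro y hy
    rw [hΛf]
    exact le_biSup_real (fun y => norm_nonneg _) hbdf hy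
  -- the segment from y₂ to y₁
  set v := y₁ - y₂ with hv
  set C := Λfa * δ + Λf * (2 * η) with hC
  have hseg : ∀ t ∈ Set.Icc (0:ℝ) 1, y₂ + t • v ∈ convexHull ℝ Y := by
    intro t ht
    have : y₂ + t • v = (1 - t) • y₂ + t • y₁ := by
      rw [hv]; module
    rw [this]
    exact (convex_convexHull ℝ Y) (subset_convexHull ℝ Y hy₂Y)
      (subset_convexHull ℝ Y hy₁Y) (by linarith [ht.2]) ht.1 (by ring)
  have hn12 : ‖n₁ - n₂‖ ≤ 2 * η := by
    calc ‖n₁ - n₂‖ ≤ ‖n₁‖ + ‖n₂‖ := norm_sub_le _ _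
    _ ≤ 2 * η := by linarith
  -- the derivative bound along the segment
  have hbound : ∀ t ∈ Set.Ico (0:ℝ) 1, ‖(fderiv ℝ f (y₂ + t • v)) v‖ ≤ C := by
    intro t ht
    set y := y₂ + t • v
    have hyY := hseg t ⟨ht.1, ht.2.le⟩
    have hvsplit : v = A (x₁ - x₂) + (n₁ - n₂) := by
      rw [hv, hy₁, hy₂, map_sub]; abel
    have : (fderiv ℝ f y) v = ((fderiv ℝ f y).comp A) (x₁ - x₂) + (fderiv ℝ f y) (n₁ - n₂) := by
      rw [hvsplit, map_add]; rfl
    rw [this]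
    calc ‖((fderiv ℝ f y).comp A) (x₁ - x₂) + (fderiv ℝ f y) (n₁ - n₂)‖
        ≤ ‖((fderiv ℝ f y).comp A) (x₁ - x₂)‖ + ‖(fderiv ℝ f y) (n₁ - n₂)‖ := norm_add_le _ _
      _ ≤ ‖(fderiv ℝ f y).comp A‖ * ‖x₁ - x₂‖ + ‖fderiv ℝ f y‖ * ‖n₁ - n₂‖ :=
          add_le_add (((fderiv ℝ f y).comp A).le_opNorm _) ((fderiv ℝ f y).le_opNorm _)
      _ ≤ Λfa * δ + Λf * (2 * η) := by
          refine add_le_add (mul_le_mul (key_fa y hyY) hclose (norm_nonneg _)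
            ((norm_nonneg _).trans (key_fa y hyY))) (mul_le_mul (key_f y hyY) hn12
            (norm_nonneg _) ((norm_nonneg _).trans (key_f y hyY)))
  -- mean value inequality on g t = f (y₂ + t • v)
  have hg : ∀ t ∈ Set.Icc (0:ℝ) 1, HasDerivWithinAt (fun t : ℝ => f (y₂ + t • v))
      ((fderiv ℝ f (y₂ + t • v)) v) (Set.Icc 0 1) t := by
    intro t ht
    have h1 : HasDerivAt (fun t : ℝ => y₂ + t • v) v t := by
      simpa using ((hasDerivAt_id t).smul_const v).const_add y₂
    exact ((hdiff (y₂ + t • v)).hasFDerivAt.comp_hasDerivAt t h1).hasDerivWithinAt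
  have hmv := norm_image_sub_le_of_norm_deriv_le_segment' hg hbound 1
    (Set.right_mem_Icc.2 zero_le_one)
  simp only [one_smul, zero_smul, add_zero, sub_zero, mul_one] at hmv
  have hfy : ‖f y₁ - f y₂‖ ≤ C := by
    have : y₂ + v = y₁ := by rw [hv]; abel
    rwa [this] at hmv
  -- combine
  have htri : |‖f y₁ - x₁‖ - ‖f y₂ - x₂‖| ≤ ‖f y₁ - f y₂‖ + ‖x₁ - x₂‖ := by
    have h := abs_norm_sub_norm_le (f y₁ - x₁) (f y₂ - x₂)
    have h2 : ‖(f y₁ - x₁) - (f y₂ - x₂)‖ ≤ ‖f y₁ - f y₂‖ + ‖x₁ - x₂‖ := by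
      have : (f y₁ - x₁) - (f y₂ - x₂) = (f y₁ - f y₂) - (x₁ - x₂) := by abel
      rw [this]; exact norm_sub_le _ _
    exact h.trans h2
  calc |‖f y₁ - x₁‖ - ‖f y₂ - x₂‖| ≤ ‖f y₁ - f y₂‖ + ‖x₁ - x₂‖ := htri
    _ ≤ C + δ := add_le_add hfy hclose
    _ = (1 + Λfa) * δ + 2 * η * Λf := by rw [hC]; ring
end
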